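/- arXiv:1607.05420 — 2 statements merged into one kernel-verified Lean document; each statement's English description precedes it below -/
import Mathlib

section
/- For any k linearly independent polynomials f_1, ..., f_k ∈ F[x], any two SDEs of order k satisfied by all the f_i are equivalent: if ∑_{i=0}^k p_i(x)g^{(i)} = 0 and ∑_{i=0}^k q_i(x)g^{(i)} = 0 are both satisfied by f_1,...,f_k, then p_k·q_i = q_k·p_i for all i ∈ {0,...,k-1}. -/
open Polynomial Finset

private lemma coeff_prod_of_le' {F : Type*} [Field F] {ι : Type*} (s : Finset ι)
    (f : ι → F[X]) (n : ι → ℕ) (h : ∀ i ∈ s, (f i).natDegree ≤ n i) :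
    (∏ i ∈ s, f i).coeff (∑ i ∈ s, n i) = ∏ i ∈ s, (f i).coeff (n i) := by
  classical
  induction s using Finset.induction_on with
  | empty => simp
  | insert _ _ ha ih =>
    rename_i a s
    rw [Finset.prod_insert ha, Finset.prod_insert ha, Finset.sum_insert ha,
      Polynomial.coeff_mul_add_eq_of_natDegree_le (h _ (mem_insert_self _ _))
        ((Polynomial.natDegree_prod_le _ _).trans
          (Finset.sum_le_sum fun i hi => h _ (mem_insert_of_mem hi))),
      ih fun i hi => h _ (mem_insert_of_mem hi)]

private lemma det_ne_zero_of_strictMono {F : Type*} [Field F] [CharZero F] {k : ℕ}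
    (f : Fin k → F[X]) (hf0 : ∀ j, f j ≠ 0)
    (hd : StrictMono fun j => (f j).natDegree) :
    (Matrix.of fun i j : Fin k => derivative^[(i : ℕ)] (f j)).det ≠ 0 := by
  classical
  have hjd : ∀ n, ∀ hn : n < k, n ≤ (f ⟨n, hn⟩).natDegree := by
    intro n
    induction n with
    | zero => intro _; exact Nat.zero_le _
    | succ m ih =>
      intro hn
      have h1 : m < k := Nat.lt_of_succ_lt hn
      have h2 : (⟨m, h1⟩ : Fin k) < ⟨m + 1, hn⟩ := by simp [Fin.lt_def]
      have h3 : (f (⟨m, h1⟩ : Fin k)).natDegree < (f ⟨m + 1, hn⟩).natDegree := hd h2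
      have := ih h1
      omega
  have hjd' : ∀ j : Fin k, (j : ℕ) ≤ (f j).natDegree := fun j => by
    simpa using hjd j j.2
  set N := ∑ j : Fin k, ((f j).natDegree - (j : ℕ)) with hN
  have key : ∀ σ : Equiv.Perm (Fin k),
      (∏ i, derivative^[((σ i : Fin k) : ℕ)] (f i)).coeff N =
      ∏ i, ((((f i).natDegree).descFactorial ((σ i : Fin k) : ℕ) : F) * (f i).leadingCoeff) := by
    intro σ
    by_cases hσ : ∀ i, ((σ i : Fin k) : ℕ) ≤ (f i).natDegree
    · have hsum : N = ∑ i : Fin k, ((f i).natDegree - ((σ i : Fin k) : ℕ)) := by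
        have h1 : ∑ i : Fin k, ((σ i : Fin k) : ℕ) = ∑ i : Fin k, (i : ℕ) :=
          Equiv.sum_comp σ fun i : Fin k => (i : ℕ)
        have h2 : ∑ i : Fin k, ((f i).natDegree - ((σ i : Fin k) : ℕ))
            + ∑ i : Fin k, ((σ i : Fin k) : ℕ) = ∑ i : Fin k, (f i).natDegree := by
          rw [← Finset.sum_add_distrib]
          exact Finset.sum_congr rfl fun i _ => Nat.sub_add_cancel (hσ i)
        have h3 : N + ∑ j : Fin k, (j : ℕ) = ∑ j : Fin k, (f j).natDegree := by
          rw [hN, ← Finset.sum_add_distrib]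
          exact Finset.sum_congr rfl fun j _ => Nat.sub_add_cancel (hjd' j)
        omega
      rw [hsum, coeff_prod_of_le' _ _ _ (fun i _ => natDegree_iterate_derivative _ _)]
      refine Finset.prod_congr rfl fun i _ => ?_
      rw [Polynomial.coeff_iterate_derivative, Nat.sub_add_cancel (hσ i), nsmul_eq_mul,
        Polynomial.coeff_natDegree]
    · push_neg at hσ
      obtain ⟨i, hi⟩ := hσ
      rw [Finset.prod_eq_zero (Finset.mem_univ i) (iterate_derivative_eq_zero hi),
        Polynomial.coeff_zero,
        Finset.prod_eq_zero (Finset.mem_univ i)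
          (by rw [Nat.descFactorial_of_lt hi]; simp)]
  have hlc : (∏ j, (f j).leadingCoeff) ≠ 0 :=
    Finset.prod_ne_zero_iff.mpr fun j _ => leadingCoeff_ne_zero.mpr (hf0 j)
  have hB : (Matrix.of fun i j : Fin k =>
      (((f j).natDegree).descFactorial (i : ℕ) : F)).det ≠ 0 := by
    have heq := Matrix.det_eval_matrixOfPolynomials_eq_det_vandermonde (R := F)
      (fun j : Fin k => ((f j).natDegree : F)) (fun i : Fin k => descPochhammer F (i : ℕ))
      (fun i => descPochhammer_natDegree F i) (fun i => monic_descPochhammer F i)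
    rw [← Matrix.det_transpose]
    have hBT : Matrix.transpose (Matrix.of fun i j : Fin k =>
          (((f j).natDegree).descFactorial (i : ℕ) : F))
        = Matrix.of fun i j : Fin k =>
            (descPochhammer F (j : ℕ)).eval (((f i).natDegree : F)) := by
      ext i j
      simp [Matrix.transpose_apply, descPochhammer_eval_eq_descFactorial]
    rw [hBT, ← heq]
    exact Matrix.det_vandermonde_ne_zero_iff.mpr
      (fun a b hab => hd.injective (Nat.cast_injective hab))
  have hcoeff : (Matrix.of fun i j : Fin k => derivative^[(i : ℕ)] (f j)).det.coeff N =
      (Matrix.of fun i j : Fin k =>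
        (((f j).natDegree).descFactorial (i : ℕ) : F)).det * ∏ j, (f j).leadingCoeff := by
    rw [Matrix.det_apply, Polynomial.finset_sum_coeff, Matrix.det_apply, Finset.sum_mul]
    refine Finset.sum_congr rfl fun σ _ => ?_
    rw [Polynomial.coeff_smul]
    show (Equiv.Perm.sign σ) • (∏ i, derivative^[((σ i : Fin k) : ℕ)] (f i)).coeff N = _
    rw [key σ, Finset.prod_mul_distrib, ← smul_mul_assoc]
    rfl
  intro h
  rw [h, Polynomial.coeff_zero] at hcoeff
  exact (mul_ne_zero hB hlc) hcoeff.symm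

private lemma det_ne_zero_of_injective {F : Type*} [Field F] [CharZero F] {k : ℕ}
    (f : Fin k → F[X]) (hf0 : ∀ j, f j ≠ 0)
    (hd : Function.Injective fun j => (f j).natDegree) :
    (Matrix.of fun i j : Fin k => derivative^[(i : ℕ)] (f j)).det ≠ 0 := by
  classical
  set σ := Tuple.sort fun j => (f j).natDegree with hσ
  have hmono : Monotone ((fun j => (f j).natDegree) ∘ σ) := Tuple.monotone_sort _
  have hsm : StrictMono fun j => (f (σ j)).natDegree :=
    hmono.strictMono_of_injective (hd.comp σ.injective)
  have h1 := det_ne_zero_of_strictMono (fun j => f (σ j)) (fun j => hf0 _) hsm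
  have h2 : (Matrix.of fun i j : Fin k => derivative^[(i : ℕ)] (f (σ j))) =
      (Matrix.of fun i j : Fin k => derivative^[(i : ℕ)] (f j)).submatrix id σ := rfl
  rw [h2, Matrix.det_permute'] at h1
  intro h
  rw [h, mul_zero] at h1
  exact h1 rfl

private lemma wronskian_ne_zero {F : Type*} [Field F] [CharZero F] {k : ℕ} :
    ∀ (n : ℕ) (f : Fin k → F[X]), LinearIndependent F f → (∑ j, (f j).natDegree) = n →
    (Matrix.of fun i j : Fin k => derivative^[(i : ℕ)] (f j)).det ≠ 0 := by
  intro n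
  induction n using Nat.strong_induction_on with
  | _ n ih =>
    intro f hf hn
    by_cases hinj : Function.Injective fun j => (f j).natDegree
    · exact det_ne_zero_of_injective f (fun j => hf.ne_zero j) hinj
    · classical
      unfold Function.Injective at hinj
      push_neg at hinj
      obtain ⟨a, b, hab, hne⟩ := hinj
      have hfa0 : f a ≠ 0 := hf.ne_zero a
      have hfb0 : f b ≠ 0 := hf.ne_zero b
      set c : F := (f a).leadingCoeff / (f b).leadingCoeff with hc
      have hc0 : c ≠ 0 :=
        div_ne_zero (leadingCoeff_ne_zero.mpr hfa0) (leadingCoeff_ne_zero.mpr hfb0)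
      set g : Fin k → F[X] := Function.update f a (f a - c • f b) with hgdef
      have hgkey : ∀ w : Fin k → F, ∑ j, w j • g j = ∑ j, w j • f j - (w a * c) • f b := by
        intro w
        have h1 : ∑ j, w j • g j
            = ∑ j, (w j • f j - (if j = a then (w a * c) • f b else 0)) := by
          refine Finset.sum_congr rfl fun j _ => ?_
          by_cases hj : j = a
          · subst hj
            simp [hgdef, Function.update_self, smul_sub, smul_smul]
          · simp [hgdef, Function.update_of_ne hj, hj]
        rw [h1, Finset.sum_sub_distrib, Finset.sum_ite_eq' Finset.univ a
          (fun _ => (w a * c) • f b)]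
        simp
      have hg : LinearIndependent F g := by
        rw [Fintype.linearIndependent_iff] at hf ⊢
        intro w hw
        have hw2 : ∑ j, (w j - if j = b then w a * c else 0) • f j = 0 := by
          have expand : ∑ j, (w j - if j = b then w a * c else 0) • f j
              = ∑ j, w j • f j - ∑ j, (if j = b then (w a * c) • f j else 0) := by
            rw [← Finset.sum_sub_distrib]
            refine Finset.sum_congr rfl fun j _ => ?_
            rw [sub_smul]
            congr 1
            split <;> simp
          rw [expand, Finset.sum_ite_eq' Finset.univ b (fun j => (w a * c) • f j)]
          simp only [Finset.mem_univ, if_true]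
          rw [← hgkey w]
          exact hw
        have hz := hf _ hw2
        have hwa : w a = 0 := by
          have := hz a
          simpa [if_neg hne] using this
        intro i
        by_cases hi : i = b
        · rw [hi]
          have := hz b
          simpa [hwa] using this
        · have := hz i
          simpa [if_neg hi] using this
      have hga0 : g a ≠ 0 := hg.ne_zero a
      have hdeglt : (g a).natDegree < (f a).natDegree := by
        have hdega : (f a).degree = (c • f b).degree := by
          rw [Polynomial.smul_eq_C_mul, Polynomial.degree_C_mul hc0,
            Polynomial.degree_eq_natDegree hfa0, Polynomial.degree_eq_natDegree hfb0]
          exact_mod_cast congrArg Nat.cast hab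
        have hlceq : (f a).leadingCoeff = (c • f b).leadingCoeff := by
          rw [Polynomial.smul_eq_C_mul, Polynomial.leadingCoeff_mul,
            Polynomial.leadingCoeff_C, hc,
            div_mul_cancel₀ _ (leadingCoeff_ne_zero.mpr hfb0)]
        have hsub := Polynomial.degree_sub_lt hdega hfa0 hlceq
        have : g a = f a - c • f b := Function.update_self a _ f
        rw [this] at hga0 ⊢
        exact Polynomial.natDegree_lt_natDegree hga0 hsub
      have hsum : ∑ j, (g j).natDegree < n := by
        rw [← hn]
        refine Finset.sum_lt_sum (fun j _ => ?_) ⟨a, Finset.mem_univ a, hdeglt⟩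
        by_cases hj : j = a
        · subst hj; exact hdeglt.le
        · rw [hgdef, Function.update_of_ne hj]
      have hdetg := ih _ hsum g hg rfl
      have hMg : (Matrix.of fun i j : Fin k => derivative^[(i : ℕ)] (g j)) =
          Matrix.updateCol (Matrix.of fun i j : Fin k => derivative^[(i : ℕ)] (f j)) a
            (fun i => (Matrix.of fun i j : Fin k => derivative^[(i : ℕ)] (f j)) i a
              + (C (-c)) • (Matrix.of fun i j : Fin k => derivative^[(i : ℕ)] (f j)) i b) := by
        refine Matrix.ext fun i j => ?_
        rw [Matrix.updateCol_apply]
        by_cases hj : j = a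
        · rw [if_pos hj, hj]
          show derivative^[(i : ℕ)] (g a)
            = derivative^[(i : ℕ)] (f a) + C (-c) • derivative^[(i : ℕ)] (f b)
          rw [hgdef, Function.update_self, Polynomial.iterate_derivative_sub,
            Polynomial.iterate_derivative_smul, sub_eq_add_neg, Polynomial.smul_eq_C_mul,
            smul_eq_mul, map_neg, neg_mul]
        · rw [if_neg hj]
          show derivative^[(i : ℕ)] (g j) = derivative^[(i : ℕ)] (f j)
          rw [hgdef, Function.update_of_ne hj]
      rw [hMg, Matrix.det_updateCol_add_smul_self _ hne (C (-c))] at hdetg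
      exact hdetg

theorem stmt6 {F : Type*} [Field F] [CharZero F] {k : ℕ} (f : Fin k → F[X])
    (hf : LinearIndependent F f) (p q : Fin (k + 1) → F[X]) (hp : p ≠ 0) (hq : q ≠ 0)
    (hfp : ∀ j, ∑ i, p i * derivative^[(i : ℕ)] (f j) = 0)
    (hfq : ∀ j, ∑ i, q i * derivative^[(i : ℕ)] (f j) = 0) :
    ∀ i : Fin k, p (Fin.last k) * q i.castSucc = q (Fin.last k) * p i.castSucc := by
  classical
  have hW : (Matrix.of fun i j : Fin k => derivative^[(i : ℕ)] (f j)).det ≠ 0 :=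
    wronskian_ne_zero _ f hf rfl
  set M := Matrix.of fun i j : Fin k => derivative^[(i : ℕ)] (f j) with hM
  set r : Fin k → F[X] :=
    fun i => p (Fin.last k) * q i.castSucc - q (Fin.last k) * p i.castSucc with hr
  have hWr : Matrix.vecMul r M = 0 := by
    funext j
    have h1 := hfp j
    have h2 := hfq j
    rw [Fin.sum_univ_castSucc] at h1 h2
    simp only [Fin.coe_castSucc, Fin.val_last] at h1 h2
    have e1 : ∑ i : Fin k, p i.castSucc * derivative^[(i : ℕ)] (f j)
        = -(p (Fin.last k) * derivative^[k] (f j)) := eq_neg_of_add_eq_zero_left h1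
    have e2 : ∑ i : Fin k, q i.castSucc * derivative^[(i : ℕ)] (f j)
        = -(q (Fin.last k) * derivative^[k] (f j)) := eq_neg_of_add_eq_zero_left h2
    have hv : Matrix.vecMul r M j = ∑ i : Fin k, r i * derivative^[(i : ℕ)] (f j) := rfl
    rw [Pi.zero_apply, hv]
    calc ∑ i : Fin k, r i * derivative^[(i : ℕ)] (f j)
        = p (Fin.last k) * ∑ i : Fin k, q i.castSucc * derivative^[(i : ℕ)] (f j)
          - q (Fin.last k) * ∑ i : Fin k, p i.castSucc * derivative^[(i : ℕ)] (f j) := by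
          rw [Finset.mul_sum, Finset.mul_sum, ← Finset.sum_sub_distrib]
          exact Finset.sum_congr rfl fun i _ => by rw [hr]; ring
      _ = 0 := by rw [e1, e2]; ring
  have hr0 : r = 0 := Matrix.eq_zero_of_vecMul_eq_zero hW hWr
  intro i
  have := congrFun hr0 i
  rw [hr, Pi.zero_apply, sub_eq_zero] at this
  exact this
end

section
/- Let f ∈ ℝ[x] have degree d ≥ 1. Either f = α(x - a)^d for some α, a ∈ ℝ, or Waring_ℝ(f) + Sparsest_ℝ(f) ≥ (d + 3)/2. -/
open Polynomial

/-- The Waring rank of a univariate polynomial `f` of degree `d`: the least `s` such that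
`f = ∑_{i=1}^s α_i (x - a_i)^d`. -/
noncomputable def waringRank {F : Type*} [Field F] (f : F[X]) : ℕ :=
  sInf {s | ∃ α a : Fin s → F, f = ∑ i, C (α i) * (X - C (a i)) ^ f.natDegree}

/-- The sparsest shift complexity of `f`: the least `s` such that
`f = ∑_{i=1}^s α_i (x - a)^{e_i}` for a single shift `a`. -/
noncomputable def sparsestShift {F : Type*} [Field F] (f : F[X]) : ℕ :=
  sInf {s | ∃ (α : Fin s → F) (c : F) (e : Fin s → ℕ), f = ∑ i, C (α i) * (X - C c) ^ e i}

lemma rolle_gaps (g : ℝ → ℝ) (hg : Differentiable ℝ g) :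
    ∀ (n : ℕ) (T : Finset ℝ), T.card = n → (∀ t ∈ T, g t = 0) → ∀ (hne : T.Nonempty),
    ∃ T' : Finset ℝ, T'.card + 1 = T.card ∧ (∀ z ∈ T', deriv g z = 0) ∧
      ∀ z ∈ T', T.min' hne < z ∧ z < T.max' hne := by
  intro n
  induction n with
  | zero =>
    intro T hc h0 hne
    rw [Finset.card_eq_zero] at hc
    subst hc; simp at hne
  | succ n ih =>
    intro T hc h0 hne
    rcases Nat.eq_zero_or_pos n with h1 | h1
    · exact ⟨∅, by simp [hc, h1], by simp, by simp⟩
    have hmax := T.max'_mem hne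
    set S := T.erase (T.max' hne) with hS
    have hSne : S.Nonempty := by
      rw [← Finset.card_pos, hS, Finset.card_erase_of_mem hmax, hc]; omega
    have hScard : S.card = n := by rw [hS, Finset.card_erase_of_mem hmax, hc]; omega
    obtain ⟨T', hT'card, hT'zero, hT'mem⟩ :=
      ih S hScard (fun t ht => h0 t (Finset.mem_of_mem_erase ht)) hSne
    have hlt : S.max' hSne < T.max' hne := by
      have h2 := S.max'_mem hSne
      exact lt_of_le_of_ne (Finset.le_max' T _ (Finset.mem_of_mem_erase h2))
        (Finset.ne_of_mem_erase h2)
    obtain ⟨z, hz, hz0⟩ := exists_deriv_eq_zero hlt hg.continuous.continuousOn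
      (by rw [h0 _ (Finset.mem_of_mem_erase (S.max'_mem hSne)), h0 _ hmax])
    have hminS : T.min' hne ≤ S.max' hSne :=
      Finset.min'_le T _ (Finset.mem_of_mem_erase (S.max'_mem hSne))
    refine ⟨insert z T', ?_, ?_, ?_⟩
    · rw [Finset.card_insert_of_notMem, hT'card, hScard, hc]
      intro hzT'
      have := (hT'mem z hzT').2
      have := hz.1
      linarith
    · intro w hw
      rcases Finset.mem_insert.mp hw with rfl | hw
      · exact hz0
      · exact hT'zero w hw
    · intro w hw
      rcases Finset.mem_insert.mp hw with rfl | hw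
      · exact ⟨lt_of_le_of_lt hminS hz.1, hz.2⟩
      · have h2 := hT'mem w hw
        have hminS' : T.min' hne ≤ S.min' hSne :=
          Finset.min'_le T _ (Finset.mem_of_mem_erase (S.min'_mem hSne))
        exact ⟨lt_of_le_of_lt hminS' h2.1, lt_trans h2.2 hlt⟩

lemma exp_sum_zeros : ∀ (n : ℕ) (S : Finset ℝ) (γ : ℝ → ℝ), S.card = n →
    (∀ l ∈ S, γ l ≠ 0) → S.Nonempty →
    ∀ (T : Finset ℝ), (∀ t ∈ T, ∑ l ∈ S, γ l * Real.exp (l * t) = 0) → T.card < S.card := by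
  intro n
  induction n with
  | zero =>
    intro S γ hc hγ hSne T hT
    rw [Finset.card_eq_zero] at hc; subst hc; simp at hSne
  | succ n ih =>
    intro S γ hc hγ hSne T hT
    rcases Nat.eq_zero_or_pos n with h1 | h1
    · -- S is a singleton
      subst h1
      rw [Finset.card_eq_one] at hc
      obtain ⟨a, rfl⟩ := hc
      have hTe : T = ∅ := by
        by_contra hTne
        obtain ⟨t, ht⟩ := Finset.nonempty_of_ne_empty hTne
        have := hT t ht
        simp only [Finset.sum_singleton] at this
        exact (mul_ne_zero (hγ a (Finset.mem_singleton_self a)) (Real.exp_ne_zero _)) this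
      simp [hTe]
    rcases T.eq_empty_or_nonempty with rfl | hTne
    · simp [hc]
    set lam := S.min' hSne with hlam
    set g : ℝ → ℝ := fun t => ∑ l ∈ S, γ l * Real.exp ((l - lam) * t) with hgdef
    have hder : ∀ t : ℝ, HasDerivAt g (∑ l ∈ S, γ l * (l - lam) * Real.exp ((l - lam) * t)) t := by
      intro t
      apply HasDerivAt.fun_sum
      intro l _
      have h2 : HasDerivAt (fun t : ℝ => (l - lam) * t) ((l - lam) * 1) t :=
        (hasDerivAt_id t).const_mul (l - lam)
      have h3 := (h2.exp).const_mul (γ l)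
      simpa [mul_comm, mul_assoc, mul_left_comm] using h3
    have hdiff : Differentiable ℝ g := fun t => (hder t).differentiableAt
    have hgz : ∀ t ∈ T, g t = 0 := by
      intro t ht
      have h4 : g t = Real.exp (-(lam * t)) * ∑ l ∈ S, γ l * Real.exp (l * t) := by
        rw [Finset.mul_sum]
        apply Finset.sum_congr rfl
        intro l _
        have h5 : (l - lam) * t = -(lam * t) + l * t := by ring
        rw [h5, Real.exp_add]; ring
      rw [h4, hT t ht, mul_zero]
    obtain ⟨T', hT'c, hT'z, _⟩ := rolle_gaps g hdiff T.card T rfl hgz hTne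
    set S' := (S.erase lam).image (· - lam) with hS'
    set γ' : ℝ → ℝ := fun m => γ (m + lam) * m with hγ'
    have hinj : Function.Injective (· - lam) := fun x y h => by
      simpa using congrArg (· + lam) h
    have hS'c : S'.card = n := by
      rw [hS', Finset.card_image_of_injective _ hinj,
        Finset.card_erase_of_mem (S.min'_mem hSne), hc]; omega
    have hγ'ne : ∀ m ∈ S', γ' m ≠ 0 := by
      intro m hm
      rw [hS'] at hm
      obtain ⟨l, hl, rfl⟩ := Finset.mem_image.mp hm
      have hlne := Finset.ne_of_mem_erase hl
      have := hγ l (Finset.mem_of_mem_erase hl)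
      simp only [hγ', sub_add_cancel]
      exact mul_ne_zero this (sub_ne_zero_of_ne hlne)
    have hS'ne : S'.Nonempty := by
      rw [← Finset.card_pos, hS'c]; exact h1
    have hT'zeros : ∀ z ∈ T', ∑ m ∈ S', γ' m * Real.exp (m * z) = 0 := by
      intro z hz
      have h6 : ∑ m ∈ S', γ' m * Real.exp (m * z) =
          ∑ l ∈ S.erase lam, γ l * (l - lam) * Real.exp ((l - lam) * z) := by
        rw [hS', Finset.sum_image (fun x _ y _ h => hinj h)]
        apply Finset.sum_congr rfl
        intro l _
        simp only [hγ', sub_add_cancel]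
      have h7 : ∑ l ∈ S.erase lam, γ l * (l - lam) * Real.exp ((l - lam) * z) =
          ∑ l ∈ S, γ l * (l - lam) * Real.exp ((l - lam) * z) :=
        Finset.sum_erase _ (by simp)
      rw [h6, h7, ← (hder z).deriv]
      exact hT'z z hz
    have := ih S' γ' hS'c hγ'ne hS'ne T' hT'zeros
    rw [hS'c] at this
    omega

lemma pow_sum_zeros (S : Finset ℝ) (hpos : ∀ s ∈ S, 0 < s) (γ : ℝ → ℝ)
    (hγ : ∀ s ∈ S, γ s ≠ 0) (hne : S.Nonempty) (T : Finset ℕ)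
    (hT : ∀ m ∈ T, ∑ s ∈ S, γ s * s ^ m = 0) : T.card < S.card := by
  have hinj : Set.InjOn Real.log S := fun x hx y hy h => by
    rw [← Real.exp_log (hpos x hx), ← Real.exp_log (hpos y hy), h]
  have hc := exp_sum_zeros (S.image Real.log).card (S.image Real.log) (fun l => γ (Real.exp l))
    rfl ?_ ?_ (T.image (Nat.cast : ℕ → ℝ)) ?_
  · rwa [Finset.card_image_of_injOn hinj,
      Finset.card_image_of_injective _ Nat.cast_injective] at hc
  · intro l hl
    obtain ⟨s, hs, rfl⟩ := Finset.mem_image.mp hl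
    show γ (Real.exp (Real.log s)) ≠ 0
    rw [Real.exp_log (hpos s hs)]
    exact hγ s hs
  · exact hne.image _
  · intro t ht
    obtain ⟨m, hm, rfl⟩ := Finset.mem_image.mp ht
    rw [Finset.sum_image (fun x hx y hy h => hinj hx hy h)]
    rw [← hT m hm]
    apply Finset.sum_congr rfl
    intro s hs
    show γ (Real.exp (Real.log s)) * Real.exp (Real.log s * (m:ℝ)) = γ s * s ^ m
    rw [mul_comm (Real.log s) (m:ℝ), Real.exp_nat_mul, Real.exp_log (hpos s hs)]
open Polynomial

lemma coeff_powsum {k : ℕ} (d : ℕ) (α a : Fin k → ℝ) (n : ℕ) :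
    (∑ i, C (α i) * (X - C (a i)) ^ d).coeff n
      = (d.choose n : ℝ) * ∑ i, α i * (-(a i)) ^ (d - n) := by
  rw [Polynomial.finset_sum_coeff, Finset.mul_sum]
  apply Finset.sum_congr rfl
  intro i _
  rw [Polynomial.coeff_C_mul]
  have h : X - C (a i) = X + C (-(a i)) := by rw [map_neg]; ring
  rw [h, Polynomial.coeff_X_add_C_pow]
  ring

lemma waring_exists (f : Polynomial ℝ) (d : ℕ) (hd : f.natDegree = d) :
    ∃ α a : Fin (d+1) → ℝ, f = ∑ i, C (α i) * (X - C (a i)) ^ d := by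
  classical
  set w : Fin (d+1) → ℝ := fun i => (i : ℕ) with hw
  have hwinj : Function.Injective w := by
    intro x y h
    exact Fin.ext (Nat.cast_injective h)
  set M := Matrix.vandermonde w with hM
  have hdet : M.det ≠ 0 := Matrix.det_vandermonde_ne_zero_iff.mpr hwinj
  set v : Fin (d+1) → ℝ := fun m => f.coeff (d - (m : ℕ)) / (d.choose (d - (m:ℕ)) : ℝ) with hv
  set α := Matrix.vecMul v M⁻¹ with hα
  have hsolve : Matrix.vecMul α M = v := by
    rw [hα, Matrix.vecMul_vecMul, Matrix.nonsing_inv_mul M (isUnit_iff_ne_zero.mpr hdet),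
      Matrix.vecMul_one]
  refine ⟨α, fun i => -(w i), ?_⟩
  ext n
  rw [coeff_powsum]
  simp only [neg_neg]
  by_cases hn : n ≤ d
  · have hm : d - n < d + 1 := by omega
    have h2 : ∑ i, α i * w i ^ (d - n) = Matrix.vecMul α M ⟨d - n, hm⟩ := by
      simp [hM, Matrix.vecMul, dotProduct, Matrix.vandermonde]
    have h3 : (⟨d - n, hm⟩ : Fin (d+1)).1 = d - n := rfl
    rw [h2, hsolve, hv]
    simp only [h3]
    have h4 : d - (d - n) = n := by omega
    rw [h4]
    have h5 : (d.choose n : ℝ) ≠ 0 := by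
      have := Nat.choose_pos hn
      positivity
    field_simp
  · have h6 : d.choose n = 0 := Nat.choose_eq_zero_of_lt (by omega)
    rw [h6, Polynomial.coeff_eq_zero_of_natDegree_lt (by omega : f.natDegree < n)]
    simp


lemma key_bound (f : Polynomial ℝ) (d : ℕ) (hd : f.natDegree = d) (hd1 : 1 ≤ d)
    (k l : ℕ) (α a : Fin k → ℝ) (β : Fin l → ℝ) (b : ℝ) (e : Fin l → ℕ)
    (hWrep : f = ∑ i, C (α i) * (X - C (a i)) ^ d)
    (hSrep : f = ∑ j, C (β j) * (X - C b) ^ e j) :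
    (∃ α c : ℝ, f = C α * (X - C c) ^ d) ∨ ((d : ℝ) + 3) / 2 ≤ (k : ℝ) + (l : ℝ) := by
  classical
  have hfne : f ≠ 0 := fun h => by rw [h, Polynomial.natDegree_zero] at hd; omega
  set g := f.comp (X + C b) with hg
  have hgnat : g.natDegree = d := by
    rw [hg, Polynomial.natDegree_comp, Polynomial.natDegree_X_add_C, mul_one, hd]
  have hgne : g ≠ 0 := fun h => by rw [h, Polynomial.natDegree_zero] at hgnat; omega
  set c : Fin k → ℝ := fun i => b - a i with hc
  have hgW : g = ∑ i, C (α i) * (X + C (c i)) ^ d := by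
    rw [hg, hWrep, Polynomial.sum_comp]
    apply Finset.sum_congr rfl
    intro i _
    rw [Polynomial.mul_comp, Polynomial.C_comp, Polynomial.pow_comp, Polynomial.sub_comp,
      Polynomial.X_comp, Polynomial.C_comp, add_sub_assoc, ← Polynomial.C_sub]
  have hgS : g = ∑ j, C (β j) * X ^ (e j) := by
    rw [hg, hSrep, Polynomial.sum_comp]
    apply Finset.sum_congr rfl
    intro j _
    rw [Polynomial.mul_comp, Polynomial.C_comp, Polynomial.pow_comp, Polynomial.sub_comp,
      Polynomial.X_comp, Polynomial.C_comp, add_sub_cancel_right]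
  set μ : ℕ → ℝ := fun m => ∑ i, α i * (c i) ^ m with hμ
  have hcoeff : ∀ n, g.coeff n = (d.choose n : ℝ) * μ (d - n) := by
    intro n
    rw [hgW, Polynomial.finset_sum_coeff, hμ, Finset.mul_sum]
    apply Finset.sum_congr rfl
    intro i _
    rw [Polynomial.coeff_C_mul, Polynomial.coeff_X_add_C_pow]
    ring
  have hμ0 : μ 0 ≠ 0 := by
    have h7 : g.coeff d ≠ 0 := by
      rw [← hgnat]
      exact Polynomial.leadingCoeff_ne_zero.mpr hgne
    rw [hcoeff d, Nat.choose_self, Nat.sub_self] at h7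
    intro h
    rw [h, mul_zero] at h7
    exact h7 rfl
  -- support bound
  have hsupp : g.support.card ≤ l := by
    have h8 : g.support ⊆ Finset.univ.image e := by
      intro n hn
      rw [Polynomial.mem_support_iff, hgS, Polynomial.finset_sum_coeff] at hn
      by_contra hni
      apply hn
      apply Finset.sum_eq_zero
      intro j _
      rw [Polynomial.coeff_C_mul, Polynomial.coeff_X_pow]
      have h9 : ¬ n = e j := fun h =>
        hni (h ▸ Finset.mem_image_of_mem e (Finset.mem_univ j))
      simp [h9]
    calc g.support.card ≤ (Finset.univ.image e).card := Finset.card_le_card h8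
      _ ≤ (Finset.univ : Finset (Fin l)).card := Finset.card_image_le
      _ = l := by simp
  set A := (Finset.range (d + 1)).filter (fun m => μ m ≠ 0) with hA
  have hAl : A.card ≤ l := by
    refine le_trans (Finset.card_le_card_of_injOn (fun m => d - m) ?_ ?_) hsupp
    · intro m hm
      simp only [Finset.mem_coe] at hm ⊢
      rw [hA, Finset.mem_filter, Finset.mem_range] at hm
      rw [Polynomial.mem_support_iff, hcoeff (d - m)]
      have h1 : d - (d - m) = m := by omega
      rw [h1]
      apply mul_ne_zero _ hm.2
      have h2 := Nat.choose_pos (show d - m ≤ d by omega)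
      positivity
    · intro x hx y hy hxy
      simp only [Finset.mem_coe, hA, Finset.mem_filter, Finset.mem_range] at hx hy
      simp only at hxy
      omega
  -- fibers over |c i|
  set R := (Finset.univ.filter (fun i => c i ≠ 0)).image (fun i => |c i|) with hR
  have hRpos : ∀ s ∈ R, 0 < s := by
    intro s hs
    rw [hR] at hs
    obtain ⟨i, hi, rfl⟩ := Finset.mem_image.mp hs
    rw [Finset.mem_filter] at hi
    exact abs_pos.mpr hi.2
  have hRk : R.card ≤ k := by
    refine le_trans Finset.card_image_le (le_trans (Finset.card_filter_le _ _) (by simp))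
  set γf : ℝ → ℝ := fun s => ∑ i ∈ Finset.univ.filter (fun i => |c i| = s), α i with hγf
  set Pf : ℝ → ℝ := fun s => ∑ i ∈ Finset.univ.filter (fun i => c i = s), α i with hPf
  set δf : ℝ → ℝ := fun s => Pf s - Pf (-s) with hδf
  have hsplit : ∀ s : ℝ, 0 < s →
      Finset.univ.filter (fun i => |c i| = s) =
        Finset.univ.filter (fun i => c i = s) ∪ Finset.univ.filter (fun i => c i = -s) := by
    intro s hs
    ext i
    simp only [Finset.mem_filter, Finset.mem_union, Finset.mem_univ, true_and]
    exact abs_eq (le_of_lt hs)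
  have hdisj2 : ∀ s : ℝ, 0 < s →
      Disjoint (Finset.univ.filter (fun i => c i = s)) (Finset.univ.filter (fun i => c i = -s)) := by
    intro s hs
    rw [Finset.disjoint_left]
    intro i hi hi'
    rw [Finset.mem_filter] at hi hi'
    rw [hi.2] at hi'
    have := hi'.2
    linarith
  have hγPN : ∀ s : ℝ, 0 < s → γf s = Pf s + Pf (-s) := by
    intro s hs
    show (∑ i ∈ Finset.univ.filter (fun i => |c i| = s), α i) = _
    rw [hsplit s hs, Finset.sum_union (hdisj2 s hs)]
  have hfiber : ∀ m, 1 ≤ m → μ m =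
      ∑ s ∈ R, ∑ i ∈ (Finset.univ.filter (fun i => c i ≠ 0)).filter (fun i => |c i| = s),
        α i * c i ^ m := by
    intro m hm
    rw [Finset.sum_fiberwise_of_maps_to (fun i hi => Finset.mem_image_of_mem _ hi)]
    refine (Finset.sum_filter_of_ne ?_).symm
    intro i _ hne0 h0
    apply hne0
    rw [h0, zero_pow (by omega), mul_zero]
  have hff : ∀ s : ℝ, 0 < s →
      (Finset.univ.filter (fun i => c i ≠ 0)).filter (fun i => |c i| = s) =
        Finset.univ.filter (fun i => |c i| = s) := by
    intro s hs
    ext i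
    simp only [Finset.mem_filter, Finset.mem_univ, true_and]
    constructor
    · rintro ⟨_, h2⟩; exact h2
    · intro h2
      refine ⟨fun h0 => ?_, h2⟩
      rw [h0, abs_zero] at h2
      linarith
  have heven : ∀ m, 1 ≤ m → Even m → μ m = ∑ s ∈ R, γf s * s ^ m := by
    intro m h1 h2
    rw [hfiber m h1]
    apply Finset.sum_congr rfl
    intro s hs
    have hspos := hRpos s hs
    rw [hff s hspos]
    show _ = (∑ i ∈ Finset.univ.filter (fun i => |c i| = s), α i) * s ^ m
    rw [Finset.sum_mul]
    apply Finset.sum_congr rfl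
    intro i hi
    rw [Finset.mem_filter] at hi
    rw [← hi.2, Even.pow_abs h2]
  have hodd : ∀ m, 1 ≤ m → ¬ Even m → μ m = ∑ s ∈ R, δf s * s ^ m := by
    intro m h1 h2
    have hoddm : Odd m := Nat.not_even_iff_odd.mp h2
    rw [hfiber m h1]
    apply Finset.sum_congr rfl
    intro s hs
    have hspos := hRpos s hs
    rw [hff s hspos, hsplit s hspos, Finset.sum_union (hdisj2 s hspos)]
    have e1 : ∑ i ∈ Finset.univ.filter (fun i => c i = s), α i * c i ^ m = Pf s * s ^ m := by
      show _ = (∑ i ∈ Finset.univ.filter (fun i => c i = s), α i) * s ^ m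
      rw [Finset.sum_mul]
      apply Finset.sum_congr rfl
      intro i hi
      rw [(Finset.mem_filter.mp hi).2]
    have e2 : ∑ i ∈ Finset.univ.filter (fun i => c i = -s), α i * c i ^ m =
        -(Pf (-s) * s ^ m) := by
      show _ = -((∑ i ∈ Finset.univ.filter (fun i => c i = -s), α i) * s ^ m)
      rw [Finset.sum_mul, ← Finset.sum_neg_distrib]
      apply Finset.sum_congr rfl
      intro i hi
      rw [(Finset.mem_filter.mp hi).2, hoddm.neg_pow]
      ring
    rw [e1, e2]
    show _ = (Pf s - Pf (-s)) * s ^ m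
    ring
  -- zero sets and parity counts
  set Ze := (Finset.range (d + 1)).filter (fun m => μ m = 0 ∧ Even m) with hZe
  set Zo := (Finset.range (d + 1)).filter (fun m => μ m = 0 ∧ ¬ Even m) with hZo
  have hpart : A.card + (Ze.card + Zo.card) = d + 1 := by
    have h1 := Finset.card_filter_add_card_filter_not
      (s := Finset.range (d + 1)) (p := fun m => μ m ≠ 0)
    have h2 : (Finset.range (d + 1)).filter (fun m => ¬ μ m ≠ 0) =
        (Finset.range (d + 1)).filter (fun m => μ m = 0) := by
      ext m; simp [not_not]
    rw [h2] at h1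
    have h3 := Finset.card_filter_add_card_filter_not
      (s := (Finset.range (d + 1)).filter (fun m => μ m = 0)) (p := Even)
    have h4 : ((Finset.range (d + 1)).filter (fun m => μ m = 0)).filter Even = Ze := by
      ext m
      simp only [hZe, Finset.mem_filter, Finset.mem_range]
      tauto
    have h5 : ((Finset.range (d + 1)).filter (fun m => μ m = 0)).filter (fun m => ¬ Even m) = Zo := by
      ext m
      simp only [hZo, Finset.mem_filter, Finset.mem_range]
      tauto
    rw [Finset.card_range] at h1
    rw [h4, h5] at h3
    rw [hA]
    omega
  set Ev := ((Finset.range (d + 1)).filter (fun m => Even m)).card with hEv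
  set Od := ((Finset.range (d + 1)).filter (fun m => ¬ Even m)).card with hOd
  have hEvOd : Ev + Od = d + 1 := by
    rw [hEv, hOd, Finset.card_filter_add_card_filter_not, Finset.card_range]
  have hOdEv : Od ≤ Ev := by
    apply Finset.card_le_card_of_injOn (fun m => m - 1)
    · intro m hm
      simp only [Finset.mem_coe] at hm ⊢
      rw [Finset.mem_filter, Finset.mem_range] at hm ⊢
      obtain ⟨hm1, hm2⟩ := hm
      rw [Nat.even_iff] at hm2 ⊢
      omega
    · intro x hx y hy hxy
      simp only [Finset.mem_coe, Finset.mem_filter, Finset.mem_range, Nat.even_iff] at hx hy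
      simp only at hxy
      omega
  have h0Ev : 0 ∈ (Finset.range (d + 1)).filter (fun m => Even m) := by
    rw [Finset.mem_filter, Finset.mem_range]
    exact ⟨by omega, Even.zero⟩
  have hEvOd1 : Ev ≤ Od + 1 := by
    have h6 : (((Finset.range (d + 1)).filter (fun m => Even m)).erase 0).card ≤ Od := by
      apply Finset.card_le_card_of_injOn (fun m => m - 1)
      · intro m hm
        simp only [Finset.mem_coe] at hm ⊢
        rw [Finset.mem_erase, Finset.mem_filter, Finset.mem_range] at hm
        rw [Finset.mem_filter, Finset.mem_range]
        obtain ⟨h0, hm1, hm2⟩ := hm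
        rw [Nat.even_iff] at hm2
        rw [Nat.even_iff]
        omega
      · intro x hx y hy hxy
        simp only [Finset.mem_coe, Finset.mem_erase, Finset.mem_filter, Finset.mem_range,
          Nat.even_iff] at hx hy
        simp only at hxy
        omega
    rw [Finset.card_erase_of_mem h0Ev] at h6
    have h7 : 0 < Ev := Finset.card_pos.mpr ⟨0, h0Ev⟩
    omega
  have hZe0 : ∀ m ∈ Ze, 1 ≤ m := by
    intro m hm
    rw [hZe, Finset.mem_filter] at hm
    rcases Nat.eq_zero_or_pos m with rfl | h
    · exact absurd hm.2.1 hμ0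
    · exact h
  have hZo0 : ∀ m ∈ Zo, 1 ≤ m := by
    intro m hm
    rw [hZo, Finset.mem_filter] at hm
    rcases Nat.eq_zero_or_pos m with rfl | h
    · exact absurd Even.zero hm.2.2
    · exact h
  -- pair-counting bound
  have hpair : ∀ D : Finset ℝ, D ⊆ R → (∀ s ∈ D, Pf s ≠ 0 ∧ Pf (-s) ≠ 0) → 2 * D.card ≤ k := by
    intro D hDR hDne
    have hdisj : ∀ s ∈ D, ∀ t ∈ D, s ≠ t →
        Disjoint (Finset.univ.filter (fun i => |c i| = s))
          (Finset.univ.filter (fun i => |c i| = t)) := by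
      intro s _ t _ hst
      rw [Finset.disjoint_left]
      intro i hi hi'
      rw [Finset.mem_filter] at hi hi'
      exact hst (hi.2 ▸ hi'.2 ▸ rfl)
    have hfib2 : ∀ s ∈ D, 2 ≤ (Finset.univ.filter (fun i => |c i| = s)).card := by
      intro s hs
      have hspos := hRpos s (hDR hs)
      obtain ⟨hP, hN⟩ := hDne s hs
      obtain ⟨i, hi⟩ := Finset.nonempty_of_sum_ne_zero hP
      obtain ⟨j, hj⟩ := Finset.nonempty_of_sum_ne_zero hN
      rw [Finset.mem_filter] at hi hj
      have hij : i ≠ j := by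
        intro hijeq
        rw [hijeq, hj.2] at hi
        have := hi.2
        linarith
      apply Finset.one_lt_card.mpr
      refine ⟨i, ?_, j, ?_, hij⟩
      · rw [Finset.mem_filter]; exact ⟨Finset.mem_univ _, by rw [hi.2, abs_of_pos hspos]⟩
      · rw [Finset.mem_filter]; exact ⟨Finset.mem_univ _, by rw [hj.2, abs_neg, abs_of_pos hspos]⟩
    calc 2 * D.card = ∑ _s ∈ D, 2 := by rw [Finset.sum_const, smul_eq_mul, mul_comm]
      _ ≤ ∑ s ∈ D, (Finset.univ.filter (fun i => |c i| = s)).card :=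
          Finset.sum_le_sum hfib2
      _ = (D.biUnion (fun s => Finset.univ.filter (fun i => |c i| = s))).card :=
          (Finset.card_biUnion hdisj).symm
      _ ≤ (Finset.univ : Finset (Fin k)).card := Finset.card_le_card (Finset.subset_univ _)
      _ = k := by simp
  -- main case analysis
  by_cases hγdead : ∀ s ∈ R, γf s = 0
  · by_cases hδdead : ∀ s ∈ R, δf s = 0
    · -- both dead: f is a pure power
      left
      have hμall : ∀ m, 1 ≤ m → μ m = 0 := by
        intro m h1
        by_cases h2 : Even m
        · rw [heven m h1 h2]
          exact Finset.sum_eq_zero fun s hs => by rw [hγdead s hs, zero_mul]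
        · rw [hodd m h1 h2]
          exact Finset.sum_eq_zero fun s hs => by rw [hδdead s hs, zero_mul]
      have hgX : g = C (g.coeff d) * X ^ d := by
        ext n
        rw [Polynomial.coeff_C_mul, Polynomial.coeff_X_pow]
        by_cases h3 : n = d
        · subst h3; simp
        · simp only [h3, if_false, mul_zero]
          by_cases h4 : n ≤ d
          · rw [hcoeff n, hμall (d - n) (by omega), mul_zero]
          · exact Polynomial.coeff_eq_zero_of_natDegree_lt (by omega)
      have hfg : g.comp (X - C b) = f := by
        rw [hg, Polynomial.comp_assoc, Polynomial.add_comp, Polynomial.X_comp,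
          Polynomial.C_comp, sub_add_cancel, Polynomial.comp_X]
      refine ⟨g.coeff d, b, ?_⟩
      rw [← hfg, hgX, Polynomial.mul_comp, Polynomial.C_comp, Polynomial.pow_comp,
        Polynomial.X_comp]
      simp [Polynomial.coeff_C_mul, Polynomial.coeff_X_pow]
    · -- even dead, odd alive
      right
      push_neg at hδdead
      set Rδ := R.filter (fun s => δf s ≠ 0) with hRδ
      have hRδne : Rδ.Nonempty := by
        obtain ⟨s, hs, hne⟩ := hδdead
        exact ⟨s, Finset.mem_filter.mpr ⟨hs, hne⟩⟩
      have hZoRδ : Zo.card < Rδ.card := by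
        apply pow_sum_zeros Rδ (fun s hs => hRpos s (Finset.mem_of_mem_filter s hs)) δf
          (fun s hs => (Finset.mem_filter.mp hs).2) hRδne Zo
        intro m hm
        have h1 := hZo0 m hm
        rw [hZo, Finset.mem_filter] at hm
        have hdrop : ∑ s ∈ Rδ, δf s * s ^ m = ∑ s ∈ R, δf s * s ^ m := by
          rw [hRδ]
          exact Finset.sum_filter_of_ne (fun s _ hne h0 => hne (by rw [h0, zero_mul]))
        rw [hdrop, ← hodd m h1 hm.2.2]
        exact hm.2.1
      have hZeEv : Ze.card + 1 = Ev := by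
        have h1 : Ze = ((Finset.range (d + 1)).filter (fun m => Even m)).erase 0 := by
          ext m
          rw [hZe, Finset.mem_filter, Finset.mem_erase, Finset.mem_filter]
          constructor
          · rintro ⟨h1, h2, h3⟩
            exact ⟨fun h0 => hμ0 (h0 ▸ h2), h1, h3⟩
          · rintro ⟨h0, h1, h3⟩
            refine ⟨h1, ?_, h3⟩
            rw [heven m (by omega) h3]
            exact Finset.sum_eq_zero fun s hs => by rw [hγdead s hs, zero_mul]
        rw [h1, Finset.card_erase_of_mem h0Ev]
        have h7 : 0 < Ev := Finset.card_pos.mpr ⟨0, h0Ev⟩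
        omega
      have hk2 : 2 * Rδ.card ≤ k := by
        apply hpair Rδ (Finset.filter_subset _ _)
        intro s hs
        have hsR := Finset.mem_of_mem_filter s hs
        have hδne := (Finset.mem_filter.mp hs).2
        have hγ0 := hγdead s hsR
        have hspos := hRpos s hsR
        have hPN := hγPN s hspos
        replace hδne : Pf s - Pf (-s) ≠ 0 := hδne
        have hsum0 : Pf s + Pf (-s) = 0 := by rw [← hPN, hγ0]
        constructor
        · intro h; exact hδne (by linarith)
        · intro h; exact hδne (by linarith)
      have hRδk : Rδ.card ≤ k := by omega
      have hgoal : d + 3 ≤ 2 * k + 2 * l := by omega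
      have hgoalR : (d : ℝ) + 3 ≤ 2 * (k : ℝ) + 2 * (l : ℝ) := by exact_mod_cast hgoal
      rw [div_le_iff₀ (by norm_num : (0:ℝ) < 2)]
      linarith
  · push_neg at hγdead
    set Rγ := R.filter (fun s => γf s ≠ 0) with hRγ
    have hRγne : Rγ.Nonempty := by
      obtain ⟨s, hs, hne⟩ := hγdead
      exact ⟨s, Finset.mem_filter.mpr ⟨hs, hne⟩⟩
    have hZeRγ : Ze.card < Rγ.card := by
      apply pow_sum_zeros Rγ (fun s hs => hRpos s (Finset.mem_of_mem_filter s hs)) γf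
        (fun s hs => (Finset.mem_filter.mp hs).2) hRγne Ze
      intro m hm
      have h1 := hZe0 m hm
      rw [hZe, Finset.mem_filter] at hm
      have hdrop : ∑ s ∈ Rγ, γf s * s ^ m = ∑ s ∈ R, γf s * s ^ m := by
        rw [hRγ]
        exact Finset.sum_filter_of_ne (fun s _ hne h0 => hne (by rw [h0, zero_mul]))
      rw [hdrop, ← heven m h1 hm.2.2]
      exact hm.2.1
    have hRγk : Rγ.card ≤ k := le_trans (Finset.card_filter_le _ _) hRk
    by_cases hδdead : ∀ s ∈ R, δf s = 0
    · -- odd dead, even alive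
      right
      have hZoOd : Zo.card = Od := by
        have h1 : Zo = (Finset.range (d + 1)).filter (fun m => ¬ Even m) := by
          ext m
          rw [hZo, Finset.mem_filter, Finset.mem_filter]
          constructor
          · rintro ⟨h1, _, h3⟩; exact ⟨h1, h3⟩
          · rintro ⟨h1, h3⟩
            have hm1 : 1 ≤ m := by
              rcases Nat.eq_zero_or_pos m with rfl | h
              · exact absurd Even.zero h3
              · exact h
            refine ⟨h1, ?_, h3⟩
            rw [hodd m hm1 h3]
            exact Finset.sum_eq_zero fun s hs => by rw [hδdead s hs, zero_mul]
        rw [h1]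
      have hk2 : 2 * Rγ.card ≤ k := by
        apply hpair Rγ (Finset.filter_subset _ _)
        intro s hs
        have hsR := Finset.mem_of_mem_filter s hs
        have hγne := (Finset.mem_filter.mp hs).2
        have hδ0 := hδdead s hsR
        have hspos := hRpos s hsR
        have hPN := hγPN s hspos
        replace hδ0 : Pf s - Pf (-s) = 0 := hδ0
        constructor
        · intro h; exact hγne (by rw [hPN]; linarith)
        · intro h; exact hγne (by rw [hPN]; linarith)
      have hgoal : d + 3 ≤ 2 * k + 2 * l := by omega
      have hgoalR : (d : ℝ) + 3 ≤ 2 * (k : ℝ) + 2 * (l : ℝ) := by exact_mod_cast hgoal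
      rw [div_le_iff₀ (by norm_num : (0:ℝ) < 2)]
      linarith
    · -- both alive
      right
      push_neg at hδdead
      set Rδ := R.filter (fun s => δf s ≠ 0) with hRδ
      have hRδne : Rδ.Nonempty := by
        obtain ⟨s, hs, hne⟩ := hδdead
        exact ⟨s, Finset.mem_filter.mpr ⟨hs, hne⟩⟩
      have hZoRδ : Zo.card < Rδ.card := by
        apply pow_sum_zeros Rδ (fun s hs => hRpos s (Finset.mem_of_mem_filter s hs)) δf
          (fun s hs => (Finset.mem_filter.mp hs).2) hRδne Zo
        intro m hm
        have h1 := hZo0 m hm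
        rw [hZo, Finset.mem_filter] at hm
        have hdrop : ∑ s ∈ Rδ, δf s * s ^ m = ∑ s ∈ R, δf s * s ^ m := by
          rw [hRδ]
          exact Finset.sum_filter_of_ne (fun s _ hne h0 => hne (by rw [h0, zero_mul]))
        rw [hdrop, ← hodd m h1 hm.2.2]
        exact hm.2.1
      have hRδk : Rδ.card ≤ k := le_trans (Finset.card_filter_le _ _) hRk
      have hgoal : d + 3 ≤ 2 * k + 2 * l := by omega
      have hgoalR : (d : ℝ) + 3 ≤ 2 * (k : ℝ) + 2 * (l : ℝ) := by exact_mod_cast hgoal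
      rw [div_le_iff₀ (by norm_num : (0:ℝ) < 2)]
      linarith

theorem stmt11 (f : Polynomial ℝ) (d : ℕ) (hd : f.natDegree = d) (hd1 : 1 ≤ d) :
    (∃ α c : ℝ, f = C α * (X - C c) ^ d) ∨
      ((d : ℝ) + 3) / 2 ≤ (waringRank f : ℝ) + (sparsestShift f : ℝ) := by
  classical
  obtain ⟨α0, a0, hrep0⟩ := waring_exists f d hd
  have hWmem : waringRank f ∈
      {s | ∃ α a : Fin s → ℝ, f = ∑ i, C (α i) * (X - C (a i)) ^ f.natDegree} :=
    Nat.sInf_mem ⟨d + 1, α0, a0, by rwa [hd]⟩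
  have hSmem : sparsestShift f ∈
      {s | ∃ (α : Fin s → ℝ) (c : ℝ) (e : Fin s → ℕ), f = ∑ i, C (α i) * (X - C c) ^ e i} := by
    apply Nat.sInf_mem
    refine ⟨d + 1, fun i => f.coeff i, 0, fun i => (i : ℕ), ?_⟩
    simp only [map_zero, sub_zero]
    conv_lhs => rw [Polynomial.as_sum_range' f (d + 1) (by omega)]
    rw [← Fin.sum_univ_eq_sum_range (fun i => monomial i (f.coeff i)) (d + 1)]
    exact Finset.sum_congr rfl fun i _ => (Polynomial.C_mul_X_pow_eq_monomial).symm
  obtain ⟨α, a, hWrep⟩ := hWmem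
  obtain ⟨β, b, e, hSrep⟩ := hSmem
  rw [hd] at hWrep
  exact key_bound f d hd hd1 (waringRank f) (sparsestShift f) α a β b e hWrep hSrep
end
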